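/- arXiv:1003.2425 — 3 statements merged into one kernel-verified Lean document; each statement's English description precedes it below -/
import Mathlib

section
/- If the principle C_s holds, then Split has a winning strategy in the stationary set splitting game SG. -/
noncomputable section

/-- The first uncountable ordinal. -/
def omega1 : Ordinal := (Cardinal.aleph 1).ord

/-- `C ⊆ ω₁` is club: unbounded in `ω₁` and closed (every limit `α < ω₁` with
`sup (C ∩ α) = α` belongs to `C`). -/
def IsClubSet (C : Set Ordinal) : Prop :=
  C ⊆ Set.Iio omega1 ∧
  (∀ α < omega1, ∃ β ∈ C, α < β) ∧
  (∀ α < omega1, Order.IsSuccLimit α → sSup (C ∩ Set.Iio α) = α → α ∈ C)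

/-- `S ⊆ ω₁` is stationary: it meets every club subset of `ω₁`. -/
def IsStat (S : Set Ordinal) : Prop :=
  S ⊆ Set.Iio omega1 ∧ ∀ C, IsClubSet C → (S ∩ C).Nonempty

/-- A run of the stationary set splitting game `SG`, coded by a pair of
disjoint subsets `A, B` of `ω₁` (the accepted set is `E = A ∪ B`). -/
def SGRun (A B : Set Ordinal) : Prop :=
  A ⊆ Set.Iio omega1 ∧ B ⊆ Set.Iio omega1 ∧ Disjoint A B

/-- Split wins the run `(A, B)` if `A ∪ B` is nonstationary or both `A` and `B`
are stationary. -/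
def SplitWins (A B : Set Ordinal) : Prop :=
  ¬ IsStat (A ∪ B) ∨ (IsStat A ∧ IsStat B)

/-- The run `(A, B)` is played according to Split's strategy `τ`
(`true` = put into `A`): for every accepted `α`, `α ∈ A` iff `τ` says so on the
position `(A ∩ α, B ∩ α)`. -/
def PlayedBySplit (τ : Ordinal → Set Ordinal → Set Ordinal → Bool)
    (A B : Set Ordinal) : Prop :=
  ∀ α ∈ A ∪ B, (α ∈ A ↔ τ α (A ∩ Set.Iio α) (B ∩ Set.Iio α) = true)

/-- `τ` is a winning strategy for Split. -/
def SplitWinning (τ : Ordinal → Set Ordinal → Set Ordinal → Bool) : Prop :=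
  ∀ A B, SGRun A B → PlayedBySplit τ A B → SplitWins A B

/-- The run `(A, B)` is played according to Unsplit's strategy `υ`
(`true` = accept): for every `α < ω₁`, `α` is accepted iff `υ` says so on the
position `(A ∩ α, B ∩ α)`. -/
def PlayedByUnsplit (υ : Ordinal → Set Ordinal → Set Ordinal → Bool)
    (A B : Set Ordinal) : Prop :=
  ∀ α < omega1, (α ∈ A ∪ B ↔ υ α (A ∩ Set.Iio α) (B ∩ Set.Iio α) = true)

/-- `υ` is a winning strategy for Unsplit. -/
def UnsplitWinning (υ : Ordinal → Set Ordinal → Set Ordinal → Bool) : Prop :=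
  ∀ A B, SGRun A B → PlayedByUnsplit υ A B → ¬ SplitWins A B

/-- A set of ordinals has order type `ω`. -/
def OTypeOmega (s : Set Ordinal) : Prop :=
  Ordinal.type ((· < ·) : s → s → Prop) = Ordinal.omega0

/-- The family `⟨a α β : β < γ α⟩` (for `α < ω₁` limit) witnesses `C_s`:
each `a α β` is a cofinal subset of `α` of order type `ω`; the family is
`⊆`-decreasing mod finite in `β`; and for every club `C` and stationary `E`
some `a α β` with `α ∈ E` has `a α β \ C` finite and `a α β ∩ E` infinite. -/
def CsWitness (γ : Ordinal → Ordinal) (a : Ordinal → Ordinal → Set Ordinal) : Prop :=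
  (∀ α, α < omega1 → Order.IsSuccLimit α →
    γ α < omega1 ∧
    ∀ β < γ α, a α β ⊆ Set.Iio α ∧ (∀ ξ < α, ∃ η ∈ a α β, ξ < η) ∧ OTypeOmega (a α β)) ∧
  (∀ α, α < omega1 → Order.IsSuccLimit α → ∀ β β', β < β' → β' < γ α → (a α β' \ a α β).Finite) ∧
  (∀ C E : Set Ordinal, IsClubSet C → IsStat E →
    ∃ α β, α < omega1 ∧ Order.IsSuccLimit α ∧ α ∈ E ∧ β < γ α ∧
      (a α β \ C).Finite ∧ (a α β ∩ E).Infinite)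

/-- The principle `C_s`. -/
def Cs : Prop :=
  ∃ (γ : Ordinal.{0} → Ordinal.{0}) (a : Ordinal.{0} → Ordinal.{0} → Set Ordinal.{0}), CsWitness γ a

/-- The sequence `⟨σ α : α < ω₁⟩` witnesses `D_u`: it is a `◊`-sequence, and
for every `E ⊆ ω₁` there is a club `C` such that either every `α ∈ C` guessing
`E` lies in `E`, or every `α ∈ C` guessing `E` lies outside `E`. -/
def DuWitness (σ : Ordinal → Set Ordinal) : Prop :=
  (∀ α < omega1, σ α ⊆ Set.Iio α) ∧
  (∀ A : Set Ordinal, A ⊆ Set.Iio omega1 →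
    IsStat {α | α < omega1 ∧ A ∩ Set.Iio α = σ α}) ∧
  (∀ E : Set Ordinal, E ⊆ Set.Iio omega1 →
    ∃ C, IsClubSet C ∧
      ((∀ α ∈ C, E ∩ Set.Iio α = σ α → α ∈ E) ∨
       (∀ α ∈ C, E ∩ Set.Iio α = σ α → α ∉ E)))

/-- The principle `D_u`. -/
def Du : Prop := ∃ σ : Ordinal.{0} → Set Ordinal.{0}, DuWitness σ

lemma sup_lt_omega1 (f : ℕ → Ordinal.{0}) (h : ∀ n, f n < omega1) : (⨆ n, f n) < omega1 := by
  unfold omega1 at h ⊢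
  apply Cardinal.iSup_lt_ord_of_isRegular Cardinal.isRegular_aleph_one ?_ h
  simpa using Cardinal.aleph0_lt_aleph_one

lemma isClub_inter {C D : Set Ordinal.{0}} (hC : IsClubSet C) (hD : IsClubSet D) : IsClubSet (C ∩ D) := by
  obtain ⟨hCs, hCu, hCc⟩ := hC
  obtain ⟨hDs, hDu, hDc⟩ := hD
  refine ⟨fun x hx => hCs hx.1, ?_, ?_⟩
  · intro α hα
    choose c hcC hcgt using hCu
    choose d hdD hdgt using hDu
    let step : {x : Ordinal // x < omega1} → {x : Ordinal // x < omega1} :=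
      fun x => ⟨d (c x.1 x.2) (hCs (hcC x.1 x.2)), hDs (hdD _ _)⟩
    let F : ℕ → {x : Ordinal // x < omega1} := fun n => step^[n] ⟨α, hα⟩
    let g : ℕ → Ordinal := fun n => (F n).1
    have hFsucc : ∀ n, F (n + 1) = step (F n) := fun n =>
      Function.iterate_succ_apply' step n _
    have hcmid : ∀ n, g n < c (g n) (F n).2 ∧ c (g n) (F n).2 < g (n + 1) := by
      intro n
      constructor
      · exact hcgt _ _
      · have : g (n+1) = (step (F n)).1 := by simp only [g, hFsucc]
        rw [this]
        exact hdgt _ _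
    have hmono : ∀ n, g n < g (n + 1) := fun n => (hcmid n).1.trans (hcmid n).2
    set s := ⨆ n, g n with hs
    have hlt : ∀ n, g n < omega1 := fun n => (F n).2
    have hslt : s < omega1 := sup_lt_omega1 g hlt
    have hbdd : BddAbove (Set.range g) := Ordinal.bddAbove_range g
    have hle : ∀ n, g n ≤ s := fun n => le_ciSup hbdd n
    have hgs : ∀ n, g n < s := fun n => lt_of_lt_of_le (hmono n) (hle (n + 1))
    have hg0 : g 0 = α := rfl
    have hαs : α < s := hg0 ▸ hgs 0
    have hslim : Order.IsSuccLimit s := by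
      rw [Ordinal.isSuccLimit_iff]
      constructor
      · exact ((zero_le (a := g 0)).trans_lt (hgs 0)).ne'
      · refine Order.isSuccPrelimit_of_succ_lt fun b hb => ?_
        obtain ⟨n, hn⟩ := (lt_ciSup_iff hbdd).1 hb
        exact lt_of_le_of_lt (Order.succ_le_of_lt hn) (hgs n)
    have hbddX : ∀ X : Set Ordinal, BddAbove (X ∩ Set.Iio s) :=
      fun X => ⟨s, fun x hx => le_of_lt hx.2⟩
    have hsC : s ∈ C := by
      apply hCc s hslt hslim
      apply le_antisymm
      · exact csSup_le ⟨c (g 0) (F 0).2, hcC _ _, (hcmid 0).2.trans_le (hle 1)⟩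
          (fun x hx => le_of_lt hx.2)
      · rw [hs]
        refine ciSup_le fun n => ?_
        refine le_trans (le_of_lt (hcmid n).1) (le_csSup (hbddX C) ?_)
        exact ⟨hcC _ _, (hcmid n).2.trans (hgs (n + 1))⟩
    have hsD : s ∈ D := by
      apply hDc s hslt hslim
      have hmemD : ∀ n, g (n + 1) ∈ D := by
        intro n
        have : g (n+1) = (step (F n)).1 := by simp only [g, hFsucc]
        rw [this]
        exact hdD _ _
      apply le_antisymm
      · exact csSup_le ⟨g 1, hmemD 0, hgs 1⟩ (fun x hx => le_of_lt hx.2)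
      · rw [hs]
        refine ciSup_le fun n => ?_
        refine le_trans (le_of_lt (hmono n)) (le_csSup (hbddX D) ?_)
        exact ⟨hmemD n, hgs (n + 1)⟩
    exact ⟨s, ⟨hsC, hsD⟩, hαs⟩
  · intro α hα hlim hsup
    have hne : ((C ∩ D) ∩ Set.Iio α).Nonempty := by
      by_contra hne
      rw [Set.not_nonempty_iff_eq_empty] at hne
      rw [hne, csSup_empty] at hsup
      exact hlim.ne_bot hsup.symm
    have key : ∀ X : Set Ordinal, (C ∩ D) ⊆ X → sSup (X ∩ Set.Iio α) = α := by
      intro X hX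
      apply le_antisymm
      · exact csSup_le (hne.mono (fun x hx => ⟨hX hx.1, hx.2⟩))
          (fun x hx => le_of_lt hx.2)
      · calc α = sSup ((C ∩ D) ∩ Set.Iio α) := hsup.symm
          _ ≤ sSup (X ∩ Set.Iio α) :=
            csSup_le_csSup ⟨α, fun x hx => le_of_lt hx.2⟩ hne
              (fun x hx => ⟨hX hx.1, hx.2⟩)
    exact ⟨hCc α hα hlim (key C Set.inter_subset_left),
           hDc α hα hlim (key D Set.inter_subset_right)⟩

lemma isStat_inter_club {E C : Set Ordinal.{0}} (hE : IsStat E) (hC : IsClubSet C) :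
    IsStat (E ∩ C) := by
  refine ⟨fun x hx => hE.1 hx.1, fun D hD => ?_⟩
  have := hE.2 (C ∩ D) (isClub_inter hC hD)
  rwa [← Set.inter_assoc] at this

/-- If the principle `C_s` holds, then Split has a winning strategy in the
stationary set splitting game `SG`. -/
theorem cs_implies_split_has_winning_strategy (h : Cs) :
    ∃ τ : Ordinal.{0} → Set Ordinal.{0} → Set Ordinal.{0} → Bool, SplitWinning τ := by
  classical
  obtain ⟨γ, a, h1, h2, h3⟩ := h
  refine ⟨fun α A' B' =>
    decide (∃ β, β < γ α ∧ (a α β ∩ A').Finite ∧ (a α β ∩ B').Infinite), ?_⟩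
  intro A B hrun hplay
  by_cases hE : IsStat (A ∪ B)
  swap
  · exact Or.inl hE
  right
  obtain ⟨hA1, hB1, hdisj⟩ := hrun
  have main : ∀ C : Set Ordinal.{0}, IsClubSet C →
      ∃ α β, α ∈ A ∪ B ∧ α ∈ C ∧ Order.IsSuccLimit α ∧ α < omega1 ∧ β < γ α ∧
        a α β ⊆ Set.Iio α ∧ (a α β \ C).Finite ∧ (a α β ∩ ((A ∪ B) ∩ C)).Infinite := by
    intro C hC
    obtain ⟨α, β, hα1, hαlim, hαE, hβ, hfin, hinf⟩ :=
      h3 C ((A ∪ B) ∩ C) hC (isStat_inter_club hE hC)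
    exact ⟨α, β, hαE.1, hαE.2, hαlim, hα1, hβ,
      ((h1 α hα1 hαlim).2 β hβ).1, hfin, hinf⟩
  have hrestr : ∀ (α β : Ordinal) (X : Set Ordinal), a α β ⊆ Set.Iio α →
      a α β ∩ (X ∩ Set.Iio α) = a α β ∩ X := by
    intro α β X hsub
    ext x
    exact ⟨fun hx => ⟨hx.1, hx.2.1⟩, fun hx => ⟨hx.1, hx.2, hsub hx.1⟩⟩
  have hsplit : ∀ (α β : Ordinal) (C : Set Ordinal),
      a α β ∩ ((A ∪ B) ∩ C) ⊆ (a α β ∩ A) ∪ (a α β ∩ B) := by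
    rintro α β C x ⟨hx, hx2, -⟩
    rcases hx2 with hh | hh
    · exact Or.inl ⟨hx, hh⟩
    · exact Or.inr ⟨hx, hh⟩
  constructor
  · refine ⟨hA1, fun C hC => ?_⟩
    by_contra hemp
    rw [Set.not_nonempty_iff_eq_empty] at hemp
    obtain ⟨α, β, hαE, hαC, hαlim, hα1, hβ, hsub, hfin, hinf⟩ := main C hC
    have hAC : ∀ x, x ∈ A → x ∈ C → False := fun x hx hxc =>
      Set.eq_empty_iff_forall_notMem.1 hemp x ⟨hx, hxc⟩
    have hfinA : (a α β ∩ A).Finite :=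
      hfin.subset (fun x hx => ⟨hx.1, fun hxc => hAC x hx.2 hxc⟩)
    have hinfB : (a α β ∩ B).Infinite := fun hfinB =>
      hinf ((hfinA.union hfinB).subset (hsplit α β C))
    have hmem : α ∈ A := by
      rw [hplay α hαE, decide_eq_true_eq]
      exact ⟨β, hβ, by rwa [hrestr α β A hsub], by rwa [hrestr α β B hsub]⟩
    exact hAC α hmem hαC
  · refine ⟨hB1, fun C hC => ?_⟩
    by_contra hemp
    rw [Set.not_nonempty_iff_eq_empty] at hemp
    obtain ⟨α, β, hαE, hαC, hαlim, hα1, hβ, hsub, hfin, hinf⟩ := main C hC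
    have hBC : ∀ x, x ∈ B → x ∈ C → False := fun x hx hxc =>
      Set.eq_empty_iff_forall_notMem.1 hemp x ⟨hx, hxc⟩
    have hfinB : (a α β ∩ B).Finite :=
      hfin.subset (fun x hx => ⟨hx.1, fun hxc => hBC x hx.2 hxc⟩)
    have hinfA : (a α β ∩ A).Infinite := fun hfinA =>
      hinf ((hfinA.union hfinB).subset (hsplit α β C))
    have hmem : α ∉ A := by
      rw [hplay α hαE, decide_eq_true_eq]
      rintro ⟨β', hβ', hfin', hinf'⟩
      have hsub' : a α β' ⊆ Set.Iio α := ((h1 α hα1 hαlim).2 β' hβ').1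
      rw [hrestr α β' A hsub'] at hfin'
      rw [hrestr α β' B hsub'] at hinf'
      rcases lt_trichotomy β β' with hlt | heq | hlt
      · have hd : (a α β' \ a α β).Finite := h2 α hα1 hαlim β β' hlt hβ'
        apply hinf'
        refine (hd.union hfinB).subset ?_
        intro x hx
        by_cases hxa : x ∈ a α β
        · exact Or.inr ⟨hxa, hx.2⟩
        · exact Or.inl ⟨hx.1, hxa⟩
      · subst heq
        exact hinfA hfin'
      · have hd : (a α β \ a α β').Finite := h2 α hα1 hαlim β' β hlt hβ
        apply hinfA
        refine (hd.union hfin').subset ?_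
        intro x hx
        by_cases hxa : x ∈ a α β'
        · exact Or.inr ⟨hxa, hx.2⟩
        · exact Or.inl ⟨hx.1, hxa⟩
    rcases hαE with hh | hh
    · exact hmem hh
    · exact hBC α hh hαC

end
end

section
/- If the principle D_u holds, then Unsplit has a winning strategy in the stationary set splitting game SG. -/
noncomputable section

/-- If the principle `D_u` holds, then Unsplit has a winning strategy in the
stationary set splitting game `SG`. -/
theorem du_implies_unsplit_has_winning_strategy (h : Du) :
    ∃ υ : Ordinal.{0} → Set Ordinal.{0} → Set Ordinal.{0} → Bool, UnsplitWinning υ := by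
  obtain ⟨σ, hσ1, hσ2, hσ3⟩ := h
  classical
  refine ⟨fun α A' _ => if A' = σ α then true else false, ?_⟩
  intro A B hrun hplay hwin
  obtain ⟨hA, hB, hdisj⟩ := hrun
  have hE : (A ∪ B) ⊆ Set.Iio omega1 := Set.union_subset hA hB
  have key : ∀ α < omega1, (α ∈ A ∪ B ↔ A ∩ Set.Iio α = σ α) := by
    intro α hα
    rw [hplay α hα]
    simp
  have hEeq : {α | α < omega1 ∧ A ∩ Set.Iio α = σ α} = A ∪ B := by
    ext α
    constructor
    · rintro ⟨hα, heq⟩; exact (key α hα).2 heq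
    · intro hmem; exact ⟨hE hmem, (key α (hE hmem)).1 hmem⟩
  have hstatE : IsStat (A ∪ B) := hEeq ▸ hσ2 A hA
  obtain ⟨C, hC, hdich⟩ := hσ3 A hA
  rcases hwin with hns | ⟨hsA, hsB⟩
  · exact hns hstatE
  rcases hdich with h1 | h2
  · obtain ⟨α, hαB, hαC⟩ := hsB.2 C hC
    have hαE : α ∈ A ∪ B := Or.inr hαB
    have : α ∈ A := h1 α hαC ((key α (hE hαE)).1 hαE)
    exact Set.disjoint_left.mp hdisj this hαB
  · obtain ⟨α, hαA, hαC⟩ := hsA.2 C hC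
    have hαE : α ∈ A ∪ B := Or.inl hαA
    exact h2 α hαC ((key α (hE hαE)).1 hαE) hαA

end
end

section
/- If the principle D_u holds, then Split has no winning strategy in the stationary set splitting game SG. -/
noncomputable section

/-- Recursion step defining the `A`-side of the run defeating `τ`. -/
def Fstep (σ : Ordinal.{0} → Set Ordinal.{0})
    (τ : Ordinal → Set Ordinal → Set Ordinal → Bool)
    (α : Ordinal) (rec : ∀ β, β < α → Prop) : Prop :=
  α < omega1 ∧ {β | ∃ h : β < α, rec β h} = σ α ∧
    τ α {β | ∃ h : β < α, rec β h}
      ({β | ∃ h : β < α, β < omega1 ∧ {γ | ∃ h' : γ < β, rec γ (h'.trans h)} = σ β}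
        \ {β | ∃ h : β < α, rec β h}) = true

/-- Abbreviation for the well-foundedness of `<` on ordinals. -/
def wfo : WellFounded ((· < ·) : Ordinal.{0} → Ordinal.{0} → Prop) := wellFounded_lt

/-- The `A`-side of the run defeating `τ`, built by transfinite recursion. -/
def Aset (σ : Ordinal.{0} → Set Ordinal.{0})
    (τ : Ordinal → Set Ordinal → Set Ordinal → Bool) : Set Ordinal :=
  {α | wfo.fix (Fstep σ τ) α}

/-- The accepted set of the run defeating `τ`. -/
def Eset (σ : Ordinal.{0} → Set Ordinal.{0})
    (τ : Ordinal → Set Ordinal → Set Ordinal → Bool) : Set Ordinal :=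
  {β | β < omega1 ∧ Aset σ τ ∩ Set.Iio β = σ β}

lemma Aset_seg (σ : Ordinal.{0} → Set Ordinal.{0})
    (τ : Ordinal → Set Ordinal → Set Ordinal → Bool) (α : Ordinal) :
    {β | ∃ _ : β < α, wfo.fix (Fstep σ τ) β} = Aset σ τ ∩ Set.Iio α := by
  ext β
  simp only [Set.mem_setOf_eq, Set.mem_inter_iff, Set.mem_Iio, exists_prop]
  exact ⟨fun ⟨h1, h2⟩ => ⟨h2, h1⟩, fun ⟨h1, h2⟩ => ⟨h2, h1⟩⟩

lemma mem_Aset_iff (σ : Ordinal.{0} → Set Ordinal.{0})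
    (τ : Ordinal → Set Ordinal → Set Ordinal → Bool) (α : Ordinal) :
    α ∈ Aset σ τ ↔
      α < omega1 ∧ Aset σ τ ∩ Set.Iio α = σ α ∧
        τ α (Aset σ τ ∩ Set.Iio α)
          ((Eset σ τ ∩ Set.Iio α) \ (Aset σ τ ∩ Set.Iio α)) = true := by
  have hfix := WellFounded.fix_eq wfo (Fstep σ τ) α
  have h2 : {β | ∃ _ : β < α, β < omega1 ∧
      {γ | ∃ _ : γ < β, wfo.fix (Fstep σ τ) γ} = σ β} = Eset σ τ ∩ Set.Iio α := by
    ext β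
    constructor
    · rintro ⟨hβα, hb1, hb2⟩
      refine ⟨⟨hb1, ?_⟩, hβα⟩
      rw [← Aset_seg σ τ β]; exact hb2
    · rintro ⟨⟨hb1, hb2⟩, hβα⟩
      exact ⟨hβα, hb1, by rw [Aset_seg σ τ β]; exact hb2⟩
  show wfo.fix (Fstep σ τ) α ↔ _
  rw [hfix]
  show (α < omega1 ∧ {β | ∃ _ : β < α, wfo.fix (Fstep σ τ) β} = σ α ∧
    τ α {β | ∃ _ : β < α, wfo.fix (Fstep σ τ) β}
      ({β | ∃ _ : β < α, β < omega1 ∧ {γ | ∃ _ : γ < β, wfo.fix (Fstep σ τ) γ} = σ β}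
        \ {β | ∃ _ : β < α, wfo.fix (Fstep σ τ) β}) = true) ↔ _
  rw [Aset_seg σ τ α, h2]

/-- If the principle `D_u` holds, then Split has no winning strategy in the
stationary set splitting game `SG`. -/
theorem du_implies_split_has_no_winning_strategy (h : Du) :
    ¬ ∃ τ : Ordinal.{0} → Set Ordinal.{0} → Set Ordinal.{0} → Bool, SplitWinning τ := by
  rintro ⟨τ, hτ⟩
  obtain ⟨σ, hσ1, hσ2, hσ3⟩ := h
  set A : Set Ordinal := Aset σ τ with hA
  set E : Set Ordinal := Eset σ τ with hE
  set B : Set Ordinal := E \ A with hB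
  have hAE : A ⊆ E := by
    intro α hα
    obtain ⟨h1, h2, _⟩ := (mem_Aset_iff σ τ α).1 hα
    exact ⟨h1, h2⟩
  have hEsub : E ⊆ Set.Iio omega1 := fun α hα => hα.1
  have hAsub : A ⊆ Set.Iio omega1 := fun α hα => hEsub (hAE hα)
  have hunion : A ∪ B = E := by
    rw [hB, Set.union_diff_cancel' (le_refl A) hAE]
  -- the run is legal
  have hrun : SGRun A B :=
    ⟨hAsub, fun α hα => hEsub hα.1, Set.disjoint_sdiff_right⟩
  -- B ∩ Iio α computation
  have hBseg : ∀ α, B ∩ Set.Iio α = (E ∩ Set.Iio α) \ (A ∩ Set.Iio α) := by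
    intro α; ext β
    simp only [hB, Set.mem_inter_iff, Set.mem_diff, Set.mem_Iio]
    tauto
  -- the run follows τ
  have hplay : PlayedBySplit τ A B := by
    intro α hα
    rw [hunion] at hα
    obtain ⟨h1, h2⟩ := hα
    rw [mem_Aset_iff σ τ α, hBseg α]
    constructor
    · rintro ⟨_, _, h3⟩; exact h3
    · intro h3; exact ⟨h1, h2, h3⟩
  -- E is stationary by the diamond property
  have hEstat : IsStat E := by
    have := hσ2 A hAsub
    convert this using 1
    rfl
  -- Split wins, so A and B are stationary
  have hwin := hτ A B hrun hplay
  rw [SplitWins, hunion] at hwin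
  obtain ⟨hAstat, hBstat⟩ := hwin.resolve_left (fun hc => hc hEstat)
  -- apply the uniformization property to A
  obtain ⟨C, hC, hdich⟩ := hσ3 A hAsub
  rcases hdich with hall | hnone
  · obtain ⟨α, hαB, hαC⟩ := hBstat.2 C hC
    exact hαB.2 (hall α hαC hαB.1.2)
  · obtain ⟨α, hαA, hαC⟩ := hAstat.2 C hC
    exact hnone α hαC ((mem_Aset_iff σ τ α).1 hαA).2.1 hαA

end
end
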